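/- Let Θ₀, Θ∞ ∈ ℂ, let U ⊆ ℂ be a nonempty open connected set, and let y, z : U → ℂ be differentiable functions with y(t) ≠ 0 for all t ∈ U that solve the Jimbo–Miwa Hamiltonian system for P_IV: y'(t) = −4z(t) + y(t)² + 2t·y(t) + 4Θ₀ and z'(t) = −(2/y(t))z(t)² + (−y(t) + 4Θ₀/y(t))z(t) + (Θ₀ + Θ∞)y(t) on U. Then y is twice differentiable on U and satisfies the fourth Painlevé equation y'' = (y')²/(2y) + (3/2)y³ + 4t·y² + 2(t² − α)y + β/y on U with parameters α = 2Θ∞ − 1 and β = −8Θ₀². -/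

import Mathlib

open Complex

/-- a solution `(y, z)` of the Jimbo–Miwa Hamiltonian system for P_IV with
parameters `Θ₀, Θoo` (with `y` nonvanishing) yields a solution `y` of the fourth
Painlevé equation with parameters `α = 2Θ∞ − 1`, `β = −8Θ₀²`. -/
theorem jimbo_miwa_hamiltonian_system_gives_PIV
    (Θ₀ Θoo : ℂ) (U : Set ℂ)
    (hUo : IsOpen U) (hUne : U.Nonempty) (hUc : IsPreconnected U)
    (y z : ℂ → ℂ)
    (hy0 : ∀ t ∈ U, y t ≠ 0)
    (hy : ∀ t ∈ U, HasDerivAt y (-4 * z t + (y t) ^ 2 + 2 * t * y t + 4 * Θ₀) t)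
    (hz : ∀ t ∈ U, HasDerivAt z
      (-(2 / y t) * (z t) ^ 2 + (-(y t) + 4 * Θ₀ / y t) * z t + (Θ₀ + Θoo) * y t) t)
    (α β : ℂ) (hα : α = 2 * Θoo - 1) (hβ : β = -8 * Θ₀ ^ 2) :
    ∀ t ∈ U, DifferentiableAt ℂ y t ∧ DifferentiableAt ℂ (deriv y) t ∧
      deriv (deriv y) t =
        (deriv y t) ^ 2 / (2 * y t) + 3 / 2 * (y t) ^ 3 + 4 * t * (y t) ^ 2
          + 2 * (t ^ 2 - α) * y t + β / y t := by
  subst hα hβ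
  intro t ht
  have hyt := hy t ht
  have hzt := hz t ht
  have hy0t := hy0 t ht
  -- y' agrees with the expression on U
  have hdy : ∀ s ∈ U, deriv y s = -4 * z s + (y s) ^ 2 + 2 * s * y s + 4 * Θ₀ :=
    fun s hs => (hy s hs).deriv
  -- derivative of the expression at t
  have hg : HasDerivAt (fun s => -4 * z s + (y s) ^ 2 + 2 * s * y s + 4 * Θ₀)
      (-4 * (-(2 / y t) * (z t) ^ 2 + (-(y t) + 4 * Θ₀ / y t) * z t + (Θ₀ + Θoo) * y t)
        + 2 * y t * (-4 * z t + (y t) ^ 2 + 2 * t * y t + 4 * Θ₀)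
        + (2 * y t + 2 * t * (-4 * z t + (y t) ^ 2 + 2 * t * y t + 4 * Θ₀)) + 0) t := by
    have h1 := (hzt.const_mul (-4 : ℂ))
    have h2 : HasDerivAt (fun s => (y s) ^ 2)
        (2 * y t * (-4 * z t + (y t) ^ 2 + 2 * t * y t + 4 * Θ₀)) t := by
      have := hyt.fun_pow 2
      simpa [mul_comm, mul_assoc, mul_left_comm] using this
    have h3 : HasDerivAt (fun s => 2 * s * y s)
        (2 * y t + 2 * t * (-4 * z t + (y t) ^ 2 + 2 * t * y t + 4 * Θ₀)) t := by
      have := ((hasDerivAt_id t).const_mul (2 : ℂ)).fun_mul hyt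
      simpa [mul_comm, mul_assoc, mul_left_comm] using this
    simpa using ((h1.add h2).add h3).add_const (4 * Θ₀)
  have hU : (fun s => -4 * z s + (y s) ^ 2 + 2 * s * y s + 4 * Θ₀) =ᶠ[nhds t] deriv y := by
    filter_upwards [hUo.mem_nhds ht] with s hs using (hdy s hs).symm
  have hg' : HasDerivAt (deriv y) _ t := hg.congr_of_eventuallyEq hU.symm
  refine ⟨hyt.differentiableAt, hg'.differentiableAt, ?_⟩
  rw [hg'.deriv, hyt.deriv]
  field_simp
  ring
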